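/- Let L be a linear order, B = B(L), and let a₀, a₁, a₂ ∈ B be a homogeneous triple such that the common index ℓ satisfies ℓ ≠ 0 and ℓ+1 ≠ k−1 (i.e., in the homogeneity condition for the pair (a₁, a₂), the endpoints of a₂ lie strictly between two non-extreme endpoints of a₁). Then the symmetric difference a₁ △ a₂ is contained in a single interval J = [σ⃗_{a₀}(ℓ'), σ⃗_{a₀}(ℓ'+1)) determined by a₀, and consequently either a₀·a₁·(−a₂) = 0 or (−a₀)·(−a₁)·a₂ = 0. -/

import Mathlib

universe u

/-- `L⁺ = L ∪ {−∞, ∞}`: the order `L` with adjoined minimum `⊥ = −∞` and maximum `⊤ = ∞`. -/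
abbrev LPlus (L : Type u) := WithBot (WithTop L)

/-- The embedding of `L` into `L⁺`. -/
def toPlus {L : Type u} (x : L) : LPlus L := ((x : WithTop L) : WithBot (WithTop L))

/-- The half-open interval `[s, t) = {x ∈ L : s ≤ x < t}` with endpoints in `L⁺`. -/
def seg (L : Type u) [LinearOrder L] (s t : LPlus L) : Set L :=
  {x | s ≤ toPlus x ∧ toPlus x < t}

/-- The interval Boolean algebra `B(L)`: the subalgebra of `P(L)` generated by the
half-open intervals `[s, t)`, `s, t ∈ L⁺`; equivalently, the collection of finite
unions of such intervals. -/
def IntervalAlgebra (L : Type u) [LinearOrder L] : Set (Set L) :=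
  {a | ∃ (n : ℕ) (f : Fin n → LPlus L × LPlus L), a = ⋃ i, seg L (f i).1 (f i).2}

/-- Membership in `L* = {x ∈ L : ∃ y < x} ∪ {−∞, ∞}`, the admissible canonical
endpoints. -/
def InStar (L : Type u) [LinearOrder L] (x : LPlus L) : Prop :=
  x = ⊥ ∨ x = ⊤ ∨ ∃ y : L, toPlus y < x

/-- `⋃_{i<n} [l(2i), l(2i+1))`, the union of consecutive pairs of a list of endpoints. -/
def pairedUnion (L : Type u) [LinearOrder L] (l : List (LPlus L)) : Set L :=
  {x | ∃ (i : ℕ) (h1 : 2 * i < l.length) (h2 : 2 * i + 1 < l.length),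
    l[2 * i] ≤ toPlus x ∧ toPlus x < l[2 * i + 1]}

/-- `l` is the canonical representation of `a`: a strictly increasing even-length list
of endpoints in `L*` with `a = ⋃_{i<n} [l(2i), l(2i+1))`. -/
def CanonRep (L : Type u) [LinearOrder L] (a : Set L) (l : List (LPlus L)) : Prop :=
  Even l.length ∧ l.Chain' (· < ·) ∧ (∀ x ∈ l, InStar L x) ∧ a = pairedUnion L l

/-- `σ : Fin k → L⁺` is the increasing enumeration of `σ_a`: the endpoints of the
canonical representation `l` of `a` together with `−∞` and `∞`. -/
def IsSigmaEnum (L : Type u) [LinearOrder L] (a : Set L) (k : ℕ)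
    (σ : Fin k → LPlus L) (l : List (LPlus L)) : Prop :=
  CanonRep L a l ∧ StrictMono σ ∧
    Set.range σ = insert ⊥ (insert ⊤ {x | x ∈ l})

section Aux

lemma toPlus_lt_top {L : Type u} [LinearOrder L] (x : L) : toPlus x < (⊤ : LPlus L) := by
  rw [toPlus, WithBot.lt_iff_exists_coe]
  exact ⟨⊤, rfl, WithBot.coe_lt_coe.mpr (WithTop.coe_lt_top x)⟩

lemma countP_lt_iff {α : Type*} [LinearOrder α] (l : List α) (hl : l.Pairwise (· < ·)) (v : α) :
    ∀ m (hm : m < l.length), (l[m] ≤ v ↔ m < l.countP (fun s => decide (s ≤ v))) := by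
  induction l with
  | nil => intro m hm; simp at hm
  | cons s rest ih =>
    rcases List.pairwise_cons.mp hl with ⟨hs, hrest⟩
    intro m hm
    rw [List.countP_cons]
    by_cases hsv : s ≤ v
    · simp only [hsv, decide_true, if_true]
      cases m with
      | zero => simpa using hsv
      | succ m =>
        have := ih hrest m (by simpa using hm)
        simpa [Nat.succ_lt_succ_iff] using this
    · have hzero : rest.countP (fun s => decide (s ≤ v)) = 0 := by
        rw [List.countP_eq_zero]
        intro t ht
        simpa using fun h => hsv (le_trans (hs t ht).le h)
      simp only [hsv, decide_false, if_false, hzero]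
      cases m with
      | zero => simpa using hsv
      | succ m =>
        simp only [List.getElem_cons_succ]
        constructor
        · intro h
          exact absurd (le_trans (hs _ (List.getElem_mem _)).le h) hsv
        · intro h; simp at h

lemma mem_pairedUnion_iff {L : Type u} [LinearOrder L] (l : List (LPlus L)) (he : Even l.length)
    (hl : l.Pairwise (· < ·)) (x : L) :
    x ∈ pairedUnion L l ↔ Odd (l.countP (fun s => decide (s ≤ toPlus x))) := by
  constructor
  · rintro ⟨i, h1, h2, hle, hlt⟩
    have ha : 2 * i < l.countP (fun s => decide (s ≤ toPlus x)) :=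
      (countP_lt_iff l hl (toPlus x) (2 * i) h1).mp hle
    have hb : ¬ (2 * i + 1 < l.countP (fun s => decide (s ≤ toPlus x))) := fun h =>
      absurd ((countP_lt_iff l hl (toPlus x) (2 * i + 1) h2).mpr h) (not_le.mpr hlt)
    exact ⟨i, by omega⟩
  · rintro ⟨i, hi⟩
    have hlen : l.countP (fun s => decide (s ≤ toPlus x)) ≤ l.length := List.countP_le_length
    obtain ⟨n, hn⟩ := he
    have h2 : 2 * i + 1 < l.length := by omega
    have h1 : 2 * i < l.length := by omega
    refine ⟨i, h1, h2, ?_, ?_⟩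
    · exact (countP_lt_iff l hl (toPlus x) (2 * i) h1).mpr (by omega)
    · by_contra h
      have := (countP_lt_iff l hl (toPlus x) (2 * i + 1) h2).mp (not_lt.mp h)
      omega

lemma countP_eq_indicator {α : Type*} [DecidableEq α] (l : List α) (hn : l.Nodup) (b : α) :
    l.countP (fun s => decide (s = b)) = if b ∈ l then 1 else 0 := by
  induction l with
  | nil => simp
  | cons s rest ih =>
    rcases List.nodup_cons.mp hn with ⟨hs, hr⟩
    rw [List.countP_cons]
    by_cases h : s = b
    · subst h; simp [ih hr, hs]
    · simp [h, ih hr, Ne.symm h, List.mem_cons]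

lemma countP_below {α : Type*} [LinearOrder α] [OrderBot α] (l : List α) (hn : l.Nodup)
    (v : α) (h : ∀ s ∈ l, s ≤ v → s = ⊥) :
    l.countP (fun s => decide (s ≤ v)) = if ⊥ ∈ l then 1 else 0 := by
  rw [List.countP_congr (q := fun s => decide (s = ⊥)) ?_, countP_eq_indicator l hn ⊥]
  intro s hs
  simp only [decide_eq_true_eq]
  exact ⟨h s hs, fun hb => hb ▸ bot_le⟩

lemma countP_above {α : Type*} [LinearOrder α] [OrderTop α] (l : List α) (hn : l.Nodup)
    (v : α) (hv : v ≠ ⊤) (h : ∀ s ∈ l, s ≠ ⊤ → s ≤ v) :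
    l.countP (fun s => decide (s ≤ v)) = l.length - (if ⊤ ∈ l then 1 else 0) := by
  have hlen : l.length = _ := List.length_eq_countP_add_countP (fun s => decide (s ≤ v))
  have : l.countP (fun a => decide ¬(decide (a ≤ v) = true)) = if ⊤ ∈ l then 1 else 0 := by
    rw [List.countP_congr (q := fun s => decide (s = ⊤)) ?_, countP_eq_indicator l hn ⊤]
    intro s hs
    simp only [decide_eq_true_eq, decide_not, Bool.not_eq_true', decide_eq_false_iff_not]
    constructor
    · intro hnle; by_contra hne; exact hnle (h s hs hne)
    · rintro rfl hle; exact hv (top_le_iff.mp hle)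
  omega

lemma strictMono_first {α : Type*} [PartialOrder α] [OrderBot α] {k : ℕ} (σ : Fin k → α)
    (hm : StrictMono σ) (hk : 0 < k) (hb : ⊥ ∈ Set.range σ) : σ ⟨0, hk⟩ = ⊥ := by
  obtain ⟨j, hj⟩ := hb
  exact le_antisymm (hj ▸ hm.monotone (by simp [Fin.le_def])) bot_le

lemma strictMono_last {α : Type*} [PartialOrder α] [OrderTop α] {k : ℕ} (σ : Fin k → α)
    (hm : StrictMono σ) (hk : 0 < k) (hb : ⊤ ∈ Set.range σ) : σ ⟨k - 1, by omega⟩ = ⊤ := by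
  obtain ⟨j, hj⟩ := hb
  refine le_antisymm le_top (hj ▸ hm.monotone ?_)
  simp [Fin.le_def]; omega

end Aux

/-- If `a₀, a₁, a₂` is a homogeneous triple in `B(L)` whose common index
`ℓ = ℓ_{1,2}` satisfies `ℓ ≠ 0` and `ℓ + 1 ≠ k − 1`, then `a₁ △ a₂` is contained in a
single interval `[σ⃗_{a₀}(ℓ'), σ⃗_{a₀}(ℓ'+1))` determined by `a₀`, and consequently
`a₀·a₁·(−a₂) = 0` or `(−a₀)·(−a₁)·a₂ = 0`. -/
theorem stmt7 (L : Type u) [LinearOrder L] (a : Fin 3 → Set L)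
    (ha : ∀ i, a i ∈ IntervalAlgebra L)
    (k : ℕ) (σ : Fin 3 → Fin k → LPlus L) (l : Fin 3 → List (LPlus L))
    (henum : ∀ i, IsSigmaEnum L (a i) k (σ i) (l i))
    (hends : ∀ i j : Fin 3, ((⊥ : LPlus L) ∈ l i ↔ (⊥ : LPlus L) ∈ l j) ∧
      ((⊤ : LPlus L) ∈ l i ↔ (⊤ : LPlus L) ∈ l j))
    -- the common indices witnessing homogeneity condition (3)
    (ℓ : Fin 3 → Fin 3 → ℕ)
    (hhom : ∀ i j : Fin 3, i < j → ∃ h : ℓ i j + 1 < k,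
      ∀ s ∈ l j, s ≠ ⊥ → s ≠ ⊤ →
        σ i ⟨ℓ i j, by omega⟩ < s ∧ s < σ i ⟨ℓ i j + 1, h⟩)
    -- the endpoints of a₂ fall strictly inside a non-extreme gap of a₁
    (h0 : ℓ 1 2 ≠ 0) (h1 : ℓ 1 2 + 1 ≠ k - 1) :
    (∃ (ℓ' : ℕ) (h : ℓ' + 1 < k),
        symmDiff (a 1) (a 2) ⊆ seg L (σ 0 ⟨ℓ', by omega⟩) (σ 0 ⟨ℓ' + 1, h⟩)) ∧
    (a 0 ∩ a 1 ∩ (a 2)ᶜ = ∅ ∨ (a 0)ᶜ ∩ (a 1)ᶜ ∩ a 2 = ∅) := by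
  obtain ⟨⟨he0, hc0, -, hpu0⟩, hm0, hr0⟩ := henum 0
  obtain ⟨⟨he1, hc1, -, hpu1⟩, hm1, hr1⟩ := henum 1
  obtain ⟨⟨he2, hc2, -, hpu2⟩, hm2, hr2⟩ := henum 2
  obtain ⟨h01, hprop01⟩ := hhom 0 1 (by decide)
  obtain ⟨h12, hprop12⟩ := hhom 1 2 (by decide)
  have hp0 : (l 0).Pairwise (· < ·) := List.isChain_iff_pairwise.mp hc0
  have hp1 : (l 1).Pairwise (· < ·) := List.isChain_iff_pairwise.mp hc1
  have hp2 : (l 2).Pairwise (· < ·) := List.isChain_iff_pairwise.mp hc2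
  have hn1 : (l 1).Nodup := hp1.imp ne_of_lt
  have hn2 : (l 2).Nodup := hp2.imp ne_of_lt
  have hk0 : 0 < k := by omega
  set A := σ 0 ⟨ℓ 0 1, by omega⟩ with hA
  set B := σ 0 ⟨ℓ 0 1 + 1, h01⟩ with hB
  -- σ 1 sends 0 to ⊥ and k-1 to ⊤
  have hfirst : σ 1 ⟨0, hk0⟩ = ⊥ :=
    strictMono_first _ hm1 hk0 (by rw [hr1]; exact Set.mem_insert _ _)
  have hlast : σ 1 ⟨k - 1, by omega⟩ = ⊤ :=
    strictMono_last _ hm1 hk0 (by rw [hr1]; exact Set.mem_insert_of_mem _ (Set.mem_insert _ _))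
  -- the two inner endpoints of a₁ around a₂'s endpoints
  have hmem : ∀ m : ℕ, ∀ hm : m < k, 0 < m → m < k - 1 →
      σ 1 ⟨m, hm⟩ ∈ l 1 ∧ σ 1 ⟨m, hm⟩ ≠ ⊥ ∧ σ 1 ⟨m, hm⟩ ≠ ⊤ := by
    intro m hm hm0' hm1'
    have hb : (⊥ : LPlus L) < σ 1 ⟨m, hm⟩ := hfirst ▸ hm1 (by simp [Fin.lt_def]; omega)
    have ht : σ 1 ⟨m, hm⟩ < ⊤ := hlast ▸ hm1 (by simp [Fin.lt_def]; omega)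
    have : σ 1 ⟨m, hm⟩ ∈ Set.range (σ 1) := Set.mem_range_self _
    rw [hr1] at this
    rcases this with h | h | h
    · exact absurd h.symm hb.ne
    · exact absurd h ht.ne
    · exact ⟨h, hb.ne', ht.ne⟩
  obtain ⟨htmem, htb, htt⟩ := hmem (ℓ 1 2) (by omega) (by omega) (by omega)
  obtain ⟨ht'mem, ht'b, ht't⟩ := hmem (ℓ 1 2 + 1) (by omega) (by omega) (by omega)
  -- key bounds for all non-extreme endpoints of l 1 and l 2
  have hbounds : ∀ s : LPlus L, (s ∈ l 1 ∨ s ∈ l 2) → s ≠ ⊥ → s ≠ ⊤ → A < s ∧ s < B := by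
    rintro s (hs | hs) hsb hst
    · exact hprop01 s hs hsb hst
    · obtain ⟨hl, hr⟩ := hprop12 s hs hsb hst
      exact ⟨lt_trans (hprop01 _ htmem htb htt).1 hl,
        lt_trans hr (hprop01 _ ht'mem ht'b ht't).2⟩
  -- the symmetric difference is contained in [A, B)
  have hsub : symmDiff (a 1) (a 2) ⊆ seg L A B := by
    intro x hx
    by_contra hout
    have hiff : x ∈ a 1 ↔ x ∈ a 2 := by
      rw [hpu1, hpu2, mem_pairedUnion_iff _ he1 hp1, mem_pairedUnion_iff _ he2 hp2]
      rcases not_and_or.mp hout with h | h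
      · push_neg at h
        have c1 : (l 1).countP (fun s => decide (s ≤ toPlus x)) = if ⊥ ∈ l 1 then 1 else 0 := by
          refine countP_below _ hn1 _ fun s hs hle => ?_
          by_contra hsb
          by_cases hst : s = ⊤
          · exact absurd (hst ▸ hle) (not_le.mpr (toPlus_lt_top x))
          · exact absurd hle (not_le.mpr (lt_trans h (hbounds s (Or.inl hs) hsb hst).1))
        have c2 : (l 2).countP (fun s => decide (s ≤ toPlus x)) = if ⊥ ∈ l 2 then 1 else 0 := by
          refine countP_below _ hn2 _ fun s hs hle => ?_
          by_contra hsb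
          by_cases hst : s = ⊤
          · exact absurd (hst ▸ hle) (not_le.mpr (toPlus_lt_top x))
          · exact absurd hle (not_le.mpr (lt_trans h (hbounds s (Or.inr hs) hsb hst).1))
        rw [c1, c2]
        have hb12 := (hends 1 2).1
        by_cases hb : ⊥ ∈ l 1
        · rw [if_pos hb, if_pos (hb12.mp hb)]
        · rw [if_neg hb, if_neg (fun h' => hb (hb12.mpr h'))]
      · push_neg at h
        have c1 : (l 1).countP (fun s => decide (s ≤ toPlus x)) =
            (l 1).length - (if ⊤ ∈ l 1 then 1 else 0) := by
          refine countP_above _ hn1 _ (toPlus_lt_top x).ne fun s hs hst => ?_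
          by_cases hsb : s = ⊥
          · exact hsb ▸ bot_le
          · exact le_trans (hbounds s (Or.inl hs) hsb hst).2.le h
        have c2 : (l 2).countP (fun s => decide (s ≤ toPlus x)) =
            (l 2).length - (if ⊤ ∈ l 2 then 1 else 0) := by
          refine countP_above _ hn2 _ (toPlus_lt_top x).ne fun s hs hst => ?_
          by_cases hsb : s = ⊥
          · exact hsb ▸ bot_le
          · exact le_trans (hbounds s (Or.inr hs) hsb hst).2.le h
        rw [c1, c2]
        have ht12 := (hends 1 2).2
        obtain ⟨n1, hn1'⟩ := he1
        obtain ⟨n2, hn2'⟩ := he2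
        by_cases hct : ⊤ ∈ l 1
        · have hl1 : 0 < (l 1).length := List.length_pos_iff.mpr (List.ne_nil_of_mem hct)
          have hl2 : 0 < (l 2).length := List.length_pos_iff.mpr (List.ne_nil_of_mem (ht12.mp hct))
          rw [if_pos hct, if_pos (ht12.mp hct), Nat.odd_iff, Nat.odd_iff]
          omega
        · rw [if_neg hct, if_neg (fun h' => hct (ht12.mpr h')), Nat.odd_iff, Nat.odd_iff]; omega
    rw [Set.mem_symmDiff] at hx
    tauto
  -- membership in a 0 is constant on [A, B)
  have key0 : ∀ x : L, x ∈ seg L A B →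
      (x ∈ a 0 ↔ Odd ((l 0).countP (fun s => decide (s ≤ A)))) := by
    rintro x ⟨hxA, hxB⟩
    rw [hpu0, mem_pairedUnion_iff _ he0 hp0]
    have : (l 0).countP (fun s => decide (s ≤ toPlus x)) =
        (l 0).countP (fun s => decide (s ≤ A)) := by
      refine List.countP_congr fun s hs => ?_
      simp only [decide_eq_true_eq]
      constructor
      · intro hle
        have : s ∈ Set.range (σ 0) := by
          rw [hr0]; exact Set.mem_insert_of_mem _ (Set.mem_insert_of_mem _ hs)
        obtain ⟨m, rfl⟩ := this
        have hlt : σ 0 m < B := lt_of_le_of_lt hle hxB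
        have : m < (⟨ℓ 0 1 + 1, h01⟩ : Fin k) := hm0.lt_iff_lt.mp hlt
        exact hm0.monotone (show m ≤ (⟨ℓ 0 1, by omega⟩ : Fin k) by
          rw [Fin.le_def]; rw [Fin.lt_def] at this; simpa using Nat.lt_succ_iff.mp this)
      · intro hle; exact le_trans hle hxA
    rw [this]
  refine ⟨⟨ℓ 0 1, h01, hsub⟩, ?_⟩
  by_cases hodd : Odd ((l 0).countP (fun s => decide (s ≤ A)))
  · right
    rw [Set.eq_empty_iff_forall_notMem]
    rintro x ⟨⟨hx0, hx1⟩, hx2⟩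
    have hxJ : x ∈ seg L A B := hsub (Set.mem_symmDiff.mpr (Or.inr ⟨hx2, hx1⟩))
    exact hx0 ((key0 x hxJ).mpr hodd)
  · left
    rw [Set.eq_empty_iff_forall_notMem]
    rintro x ⟨⟨hx0, hx1⟩, hx2⟩
    have hxJ : x ∈ seg L A B := hsub (Set.mem_symmDiff.mpr (Or.inl ⟨hx1, hx2⟩))
    exact hodd ((key0 x hxJ).mp hx0)
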